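/- Under restricted additive valuations, an EFX+ and Pareto-efficient complete allocation always exists and can be computed in time O(m log m + mn). -/
import Mathlib

open Finset

lemma aux_greedy {A G : Type} [Fintype A] [Fintype G] [DecidableEq A] [DecidableEq G]
    [Nonempty A]
    (v : A → G → ℝ) (w : G → ℝ) (hw : ∀ g, 0 ≤ w g)
    (hres : ∀ a g, v a g = 0 ∨ v a g = w g)
    (hzero : ∀ g : G, (∀ a, v a g = 0) → w g = 0) :
    ∀ (n : ℕ) (S : Finset G), S.card = n → ∀ X0 : A → Finset G,
    (Pairwise fun a b => Disjoint (X0 a) (X0 b)) →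
    (∀ a, ∀ g ∈ X0 a, v a g = w g) →
    (∀ i j : A, ∀ g ∈ X0 j, 0 < v i g →
        ∑ x ∈ (X0 j).erase g, v i x ≤ ∑ x ∈ X0 i, v i x) →
    (∀ g ∈ S, ∀ a, g ∉ X0 a) →
    (∀ g ∈ S, ∀ a, ∀ g' ∈ X0 a, w g ≤ w g') →
    ∃ X : A → Finset G,
      (∀ a, X0 a ⊆ X a) ∧
      (∀ g ∈ S, ∃ a, g ∈ X a) ∧
      (Pairwise fun a b => Disjoint (X a) (X b)) ∧
      (∀ a, ∀ g ∈ X a, v a g = w g) ∧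
      (∀ i j : A, ∀ g ∈ X j, 0 < v i g →
        ∑ x ∈ (X j).erase g, v i x ≤ ∑ x ∈ X i, v i x) := by
  have hvle : ∀ i x, v i x ≤ w x := fun i x => (hres i x).elim (fun h => h ▸ hw x) le_of_eq
  have hvnn : ∀ i x, 0 ≤ v i x := fun i x => (hres i x).elim (fun h => h ▸ le_rfl) (fun h => h ▸ hw x)
  intro n
  induction n with
  | zero =>
    intro S hS X0 hdisj hown hefx _ _
    refine ⟨X0, fun a => subset_rfl, ?_, hdisj, hown, hefx⟩
    intro g hg
    simp [Finset.card_eq_zero.mp hS] at hg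
  | succ n ih =>
    intro S hS X0 hdisj hown hefx hfresh hwt
    classical
    have hSne : S.Nonempty := by rw [← Finset.card_pos, hS]; omega
    obtain ⟨g, hgS, hgmax⟩ := S.exists_max_image w hSne
    -- candidate set
    have hC : ∃ a, v a g = w g := by
      by_cases h : ∀ a, v a g = 0
      · exact ⟨Classical.arbitrary A, by rw [h, hzero g h]⟩
      · push_neg at h; obtain ⟨a, ha⟩ := h
        exact ⟨a, (hres a g).resolve_left ha⟩
    set C : Finset A := Finset.univ.filter (fun a => v a g = w g) with hCdef
    have hCne : C.Nonempty := by
      obtain ⟨a, ha⟩ := hC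
      exact ⟨a, by simp [hCdef, ha]⟩
    obtain ⟨j, hjC, hjmin⟩ := C.exists_min_image (fun a => ∑ x ∈ X0 a, v a x) hCne
    have hjval : v j g = w g := by simpa [hCdef] using hjC
    set X1 : A → Finset G := fun a => if a = j then insert g (X0 a) else X0 a with hX1
    have hgX0 : ∀ a, g ∉ X0 a := fun a => hfresh g hgS a
    have hX1j : X1 j = insert g (X0 j) := by simp [hX1]
    have hX1ne : ∀ a, a ≠ j → X1 a = X0 a := fun a ha => by simp [hX1, ha]
    have hsub1 : ∀ a, X0 a ⊆ X1 a := by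
      intro a
      by_cases ha : a = j
      · subst ha; rw [hX1j]; exact Finset.subset_insert _ _
      · rw [hX1ne a ha]
    -- sums with weights
    have hsumw : ∀ a, ∑ x ∈ X0 a, v a x = ∑ x ∈ X0 a, w x :=
      fun a => Finset.sum_congr rfl (fun x hx => hown a x hx)
    -- disjointness of X1
    have hdisj1 : Pairwise fun a b => Disjoint (X1 a) (X1 b) := by
      intro a b hab
      by_cases ha : a = j
      · subst ha
        rw [hX1j, hX1ne b (Ne.symm hab)]
        rw [Finset.insert_eq, Finset.disjoint_union_left]
        exact ⟨by simp [hgX0 b], hdisj hab⟩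
      · by_cases hb : b = j
        · subst hb
          rw [hX1j, hX1ne a ha]
          rw [Finset.insert_eq, Finset.disjoint_union_right]
          exact ⟨by simp [hgX0 a], hdisj hab⟩
        · rw [hX1ne a ha, hX1ne b hb]; exact hdisj hab
    -- ownership for X1
    have hown1 : ∀ a, ∀ g' ∈ X1 a, v a g' = w g' := by
      intro a g' hg'
      by_cases ha : a = j
      · subst ha
        rw [hX1j] at hg'
        rcases Finset.mem_insert.mp hg' with h | h
        · subst h; exact hjval
        · exact hown _ _ h
      · rw [hX1ne a ha] at hg'; exact hown _ _ hg'
    -- EFX for X1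
    have hefx1 : ∀ i j' : A, ∀ g' ∈ X1 j', 0 < v i g' →
        ∑ x ∈ (X1 j').erase g', v i x ≤ ∑ x ∈ X1 i, v i x := by
      intro i j' g' hg' hpos
      have hmono : ∑ x ∈ X0 i, v i x ≤ ∑ x ∈ X1 i, v i x :=
        Finset.sum_le_sum_of_subset_of_nonneg (hsub1 i) (fun x _ _ => hvnn i x)
      by_cases hj' : j' = j
      · subst hj'
        rw [hX1j] at hg' ⊢
        by_cases hi : i = j'
        · subst hi
          exact Finset.sum_le_sum_of_subset_of_nonneg (Finset.erase_subset _ _)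
            (fun x _ _ => hvnn _ x) |>.trans (le_of_eq (by rw [hX1j]))
        · have hX1i : X1 i = X0 i := hX1ne i hi
          by_cases hvg : v i g = 0
          · -- i doesn't value the new good
            have hne : g' ≠ g := fun h => by rw [h, hvg] at hpos; exact lt_irrefl 0 hpos
            have hg'0 : g' ∈ X0 j' := by
              rcases Finset.mem_insert.mp hg' with h | h
              · exact absurd h hne
              · exact h
            have : (insert g (X0 j')).erase g' = insert g ((X0 j').erase g') := by
              rw [Finset.erase_insert_of_ne (Ne.symm hne)]
            rw [this, Finset.sum_insert (by simp [hgX0 j']), hvg, zero_add, hX1i]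
            exact hefx i j' g' hg'0 hpos
          · -- i values the new good: i is a candidate
            have hiC : i ∈ C := by
              simp only [hCdef, Finset.mem_filter, Finset.mem_univ, true_and]
              exact (hres i g).resolve_left hvg
            have hminle : ∑ x ∈ X0 j', v j' x ≤ ∑ x ∈ X0 i, v i x := hjmin i hiC
            have hwj : ∑ x ∈ X0 j', w x ≤ ∑ x ∈ X0 i, v i x := by
              rw [← hsumw j']; exact hminle
            -- bound LHS by weights
            have hLHS : ∑ x ∈ (insert g (X0 j')).erase g', v i x
                ≤ ∑ x ∈ (insert g (X0 j')).erase g', w x :=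
              Finset.sum_le_sum (fun x _ => hvle i x)
            have hkey : ∑ x ∈ (insert g (X0 j')).erase g', w x
                = w g + ∑ x ∈ X0 j', w x - w g' := by
              have h1 : ∑ x ∈ (insert g (X0 j')).erase g', w x + w g'
                  = ∑ x ∈ insert g (X0 j'), w x := Finset.sum_erase_add _ _ hg'
              have h2 : ∑ x ∈ insert g (X0 j'), w x = w g + ∑ x ∈ X0 j', w x :=
                Finset.sum_insert (hgX0 j')
              linarith
            rw [hX1i]
            by_cases hgg : g' = g
            · subst hgg
              calc ∑ x ∈ (insert g' (X0 j')).erase g', v i x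
                  ≤ w g' + ∑ x ∈ X0 j', w x - w g' := hLHS.trans (le_of_eq hkey)
                _ = ∑ x ∈ X0 j', w x := by ring
                _ ≤ ∑ x ∈ X0 i, v i x := hwj
            · have hg'0 : g' ∈ X0 j' := by
                rcases Finset.mem_insert.mp hg' with h | h
                · exact absurd h hgg
                · exact h
              have hwle : w g ≤ w g' := hwt g hgS j' g' hg'0
              calc ∑ x ∈ (insert g (X0 j')).erase g', v i x
                  ≤ w g + ∑ x ∈ X0 j', w x - w g' := hLHS.trans (le_of_eq hkey)
                _ ≤ ∑ x ∈ X0 j', w x := by linarith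
                _ ≤ ∑ x ∈ X0 i, v i x := hwj
      · rw [hX1ne j' hj'] at hg' ⊢
        exact (hefx i j' g' hg' hpos).trans hmono
    -- apply IH
    have hcard : (S.erase g).card = n := by
      rw [Finset.card_erase_of_mem hgS, hS]; omega
    have hfresh1 : ∀ g'' ∈ S.erase g, ∀ a, g'' ∉ X1 a := by
      intro g'' hg'' a
      obtain ⟨hne, hgS'⟩ := Finset.mem_erase.mp hg''
      by_cases ha : a = j
      · rw [ha, hX1j]
        simp only [Finset.mem_insert, not_or]
        exact ⟨hne, hfresh g'' hgS' j⟩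
      · rw [hX1ne a ha]; exact hfresh g'' hgS' a
    have hwt1 : ∀ g'' ∈ S.erase g, ∀ a, ∀ g' ∈ X1 a, w g'' ≤ w g' := by
      intro g'' hg'' a g' hg'
      obtain ⟨_, hgS'⟩ := Finset.mem_erase.mp hg''
      by_cases ha : a = j
      · rw [ha, hX1j] at hg'
        rcases Finset.mem_insert.mp hg' with h | h
        · rw [h]; exact hgmax g'' hgS'
        · exact hwt g'' hgS' j g' h
      · rw [hX1ne a ha] at hg'; exact hwt g'' hgS' a g' hg'
    obtain ⟨X, hXsub, hXcov, hXdisj, hXown, hXefx⟩ :=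
      ih (S.erase g) hcard X1 hdisj1 hown1 hefx1 hfresh1 hwt1
    refine ⟨X, fun a => (hsub1 a).trans (hXsub a), ?_, hXdisj, hXown, hXefx⟩
    intro g'' hg''
    by_cases h : g'' = g
    · subst h
      exact ⟨j, hXsub j (by rw [hX1j]; exact Finset.mem_insert_self _ _)⟩
    · exact hXcov g'' (Finset.mem_erase.mpr ⟨h, hg''⟩)

/-- Under restricted additive valuations, an EFX⁺ and
Pareto-efficient complete allocation always exists. -/
theorem stmt_8 (A G : Type) [Fintype A] [Fintype G] [DecidableEq A] [DecidableEq G]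
    [Nonempty A]
    (v : A → G → ℝ) (w : G → ℝ) (hw : ∀ g, 0 ≤ w g)
    (hres : ∀ a g, v a g = 0 ∨ v a g = w g)
    (hzero : ∀ g : G, (∀ a, v a g = 0) → w g = 0) :
    ∃ X : A → Finset G,
      (Pairwise fun a b => Disjoint (X a) (X b)) ∧
      (∀ g : G, ∃ a, g ∈ X a) ∧
      -- EFX⁺
      (∀ i j : A, ∀ g ∈ X j,
        ∑ x ∈ (X j).erase g, v i x < ∑ x ∈ X j, v i x →
        ∑ x ∈ (X j).erase g, v i x ≤ ∑ x ∈ X i, v i x) ∧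
      -- Pareto efficient
      (¬ ∃ Y : A → Finset G,
          (Pairwise fun a b => Disjoint (Y a) (Y b)) ∧ (∀ g : G, ∃ a, g ∈ Y a) ∧
          (∀ a, ∑ x ∈ X a, v a x ≤ ∑ x ∈ Y a, v a x) ∧
          (∃ a, ∑ x ∈ X a, v a x < ∑ x ∈ Y a, v a x)) := by
  classical
  have hvle : ∀ i x, v i x ≤ w x := fun i x => (hres i x).elim (fun h => h ▸ hw x) le_of_eq
  obtain ⟨X, _, hcov, hdisj, hown, hefx⟩ :=
    aux_greedy v w hw hres hzero (Finset.univ : Finset G).card Finset.univ rfl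
      (fun _ => ∅) (fun a b _ => by simp) (by simp) (by simp) (by simp) (by simp)
  have hcov' : ∀ g : G, ∃ a, g ∈ X a := fun g => hcov g (Finset.mem_univ g)
  -- total weight of any complete disjoint allocation
  have htot : ∀ Z : A → Finset G, (Pairwise fun a b => Disjoint (Z a) (Z b)) →
      (∀ g : G, ∃ a, g ∈ Z a) →
      ∑ a : A, ∑ x ∈ Z a, w x = ∑ g : G, w g := by
    intro Z hZd hZc
    have hpd : (↑(Finset.univ : Finset A) : Set A).PairwiseDisjoint Z :=
      fun a _ b _ hab => hZd hab
    have hbu : (Finset.univ : Finset A).biUnion Z = Finset.univ := by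
      ext g
      simp only [Finset.mem_biUnion, Finset.mem_univ, iff_true, true_and]
      exact hZc g
    rw [← Finset.sum_biUnion hpd, hbu]
  have hXw : ∑ a : A, ∑ x ∈ X a, v a x = ∑ g : G, w g := by
    rw [← htot X hdisj hcov']
    exact Finset.sum_congr rfl (fun a _ => Finset.sum_congr rfl (fun x hx => hown a x hx))
  refine ⟨X, hdisj, hcov', ?_, ?_⟩
  · intro i j g hg hlt
    have h := Finset.sum_erase_add (X j) (v i ·) hg
    have hpos : 0 < v i g := by linarith
    exact hefx i j g hg hpos
  · rintro ⟨Y, hYd, hYc, hle, a₀, hstrict⟩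
    have hYle : ∑ a : A, ∑ x ∈ Y a, v a x ≤ ∑ g : G, w g := by
      rw [← htot Y hYd hYc]
      exact Finset.sum_le_sum (fun a _ => Finset.sum_le_sum (fun x _ => hvle a x))
    have hlt : ∑ a : A, ∑ x ∈ X a, v a x < ∑ a : A, ∑ x ∈ Y a, v a x :=
      Finset.sum_lt_sum (fun a _ => hle a) ⟨a₀, Finset.mem_univ a₀, hstrict⟩
    rw [hXw] at hlt
    linarith
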